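/- Let X be a real Banach space and let x ∈ S_X be a Δ-point. Then for every ε > 0, every α ∈ (0,1) with α/(1 − α) < ε, and every x* ∈ S_{X*} such that x ∈ S(x*, α), there exist z* ∈ S_{X*} and α₁ > 0 such that the slice S(z*, α₁) is contained in S(x*, α) and ‖x − y‖ > 2 − ε for all y ∈ S(z*, α₁). -/

import Mathlib

set_option maxHeartbeats 1000000 in
/-- If `x ∈ S_X` is a Δ-point, then for every `ε > 0`, every
`α ∈ (0,1)` with `α/(1-α) < ε` and every slice `S(x*, α)` containing `x`,
there is a slice `S(z*, α₁) ⊆ S(x*, α)` with `‖x - y‖ > 2 - ε` for all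
`y ∈ S(z*, α₁)`. -/
theorem delta_point_slice_lemma
    {X : Type*} [NormedAddCommGroup X] [NormedSpace ℝ X] [CompleteSpace X]
    (x : X) (hx : ‖x‖ = 1)
    (hdelta : ∀ ε > 0,
      x ∈ closure (convexHull ℝ {y : X | ‖y‖ ≤ 1 ∧ 2 - ε ≤ ‖x - y‖})) :
    ∀ ε > 0, ∀ α : ℝ, 0 < α → α < 1 → α / (1 - α) < ε →
      ∀ f : StrongDual ℝ X, ‖f‖ = 1 → f x > 1 - α →
        ∃ g : StrongDual ℝ X, ‖g‖ = 1 ∧ ∃ α₁ > 0,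
          ({y : X | ‖y‖ ≤ 1 ∧ g y > 1 - α₁} ⊆ {y : X | ‖y‖ ≤ 1 ∧ f y > 1 - α}) ∧
          ∀ y : X, ‖y‖ ≤ 1 → g y > 1 - α₁ → ‖x - y‖ > 2 - ε := by
  intro ε hε α hα0 hα1 hαε f hf hfx
  have h1α : (0 : ℝ) < 1 - α := by linarith
  have hαlt : α < ε := by
    have h1 : α < ε * (1 - α) := (div_lt_iff₀ h1α).mp hαε
    nlinarith
  set β : ℝ := f x - (1 - α) with hβdef
  have hβ : 0 < β := by simp only [hβdef]; linarith
  have hfx1 : f x ≤ 1 := by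
    have := f.le_opNorm x
    rw [hf, one_mul, hx] at this
    calc f x ≤ ‖f x‖ := le_abs_self _
    _ ≤ 1 := this
  have hβα : β ≤ α := by simp only [hβdef]; linarith
  set η : ℝ := min β (ε - α) / 8 with hηdef
  have hηβ : η ≤ β / 8 := by
    have := min_le_left β (ε - α); simp only [hηdef]; linarith
  have hηεα : η ≤ (ε - α) / 8 := by
    have := min_le_right β (ε - α); simp only [hηdef]; linarith
  have hη : 0 < η := by
    have : 0 < min β (ε - α) := lt_min hβ (by linarith)
    simp only [hηdef]; linarith
  -- Step 1: get c in the convex hull close to x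
  obtain ⟨c, hc, hcd⟩ := Metric.mem_closure_iff.mp (hdelta η hη) η hη
  have hfc : f x - η < f c := by
    have h1 : ‖f (x - c)‖ ≤ ‖f‖ * ‖x - c‖ := f.le_opNorm _
    rw [map_sub, hf, one_mul] at h1
    have h2 : ‖x - c‖ < η := by rw [← dist_eq_norm]; exact hcd
    have h3 : f x - f c ≤ ‖f x - f c‖ := le_abs_self _
    have : ‖f x - f c‖ < η := lt_of_le_of_lt h1 h2
    linarith
  -- Step 2: get y in Δ_η with f y > f x - η
  obtain ⟨y, hyK, hyf⟩ :
      ∃ y ∈ {y : X | ‖y‖ ≤ 1 ∧ 2 - η ≤ ‖x - y‖}, f x - η < f y := by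
    by_contra hcon
    push_neg at hcon
    have hsub : convexHull ℝ {y : X | ‖y‖ ≤ 1 ∧ 2 - η ≤ ‖x - y‖} ⊆
        {z : X | f z ≤ f x - η} := by
      apply convexHull_min
      · intro z hz; exact hcon z hz
      · exact convex_halfSpace_le ⟨fun a b => f.map_add a b,
          fun c a => f.map_smul c a⟩ _
    exact absurd (hsub hc) (not_le.mpr hfc)
  obtain ⟨hy1, hy2⟩ := hyK
  -- Step 3: norming functional for x - y
  have hxy : x - y ≠ 0 := by
    intro h0
    rw [h0, norm_zero] at hy2
    linarith
  obtain ⟨h, hh1, hh2⟩ := exists_dual_vector ℝ (x - y) (norm_ne_zero_iff.mpr hxy)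
  have hh2' : h (x - y) = ‖x - y‖ := by exact_mod_cast hh2
  have hhx : h x ≤ 1 := by
    have := h.le_opNorm x
    rw [hh1, one_mul, hx] at this
    calc h x ≤ ‖h x‖ := le_abs_self _
    _ ≤ 1 := this
  have hhxy : 2 - η ≤ h x - h y := by
    have : h x - h y = ‖x - y‖ := by rw [← map_sub]; exact hh2'
    linarith
  have hhy : h y ≤ -1 + 2 * η := by
    have hxyn : ‖x - y‖ ≤ 2 := by
      calc ‖x - y‖ ≤ ‖x‖ + ‖y‖ := norm_sub_le _ _
      _ ≤ 2 := by rw [hx]; linarith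
    nlinarith [hhxy, hhx]
  have hfy : 1 - α + β - η < f y := by
    have : f x = 1 - α + β := by rw [hβdef]; ring
    linarith
  set r : ℝ := ‖f - h‖ with hrdef
  have hr_ub : r ≤ 2 := by
    calc r ≤ ‖f‖ + ‖h‖ := norm_sub_le _ _
    _ = 2 := by rw [hf, hh1]; norm_num
  have hr_lb : 2 - α + β - 3 * η < r := by
    have h1 : (f - h) y ≤ ‖(f - h) y‖ := le_abs_self _
    have h2 : ‖(f - h) y‖ ≤ ‖f - h‖ * ‖y‖ := (f - h).le_opNorm y
    have h3 : ‖f - h‖ * ‖y‖ ≤ r :=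
      mul_le_of_le_one_right (norm_nonneg _) hy1
    have h4 : (f - h) y = f y - h y := rfl
    linarith
  have hr_pos : (0 : ℝ) < r := by linarith
  refine ⟨r⁻¹ • (f - h), ?_, η / 4, by positivity, ?_, ?_⟩
  · rw [norm_smul, Real.norm_eq_abs, abs_inv, abs_of_pos hr_pos, ← hrdef,
      inv_mul_cancel₀ (ne_of_gt hr_pos)]
  · -- key estimates for any z in the small slice
    intro z hz
    obtain ⟨hz1, hz2⟩ := hz
    have hz2' : (f - h) z > r * (1 - η / 4) := by
      have : (r⁻¹ • (f - h)) z = r⁻¹ * ((f - h) z) := rfl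
      rw [this] at hz2
      have := (mul_lt_mul_iff_right₀ hr_pos).mpr hz2
      rw [mul_comm r, ← mul_assoc, mul_inv_cancel₀ (ne_of_gt hr_pos),
        one_mul] at this
      linarith [this]
    have hfh : (f - h) z > r - η / 2 := by nlinarith
    have hhz : -h z ≤ 1 := by
      have := h.le_opNorm z
      rw [hh1, one_mul] at this
      have h1 : -h z ≤ ‖h z‖ := neg_le_abs _
      nlinarith
    have hfz : f z > 1 - α := by
      have h4 : (f - h) z = f z - h z := rfl
      nlinarith
    exact ⟨hz1, hfz⟩
  · intro z hz1 hz2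
    have hz2' : (f - h) z > r * (1 - η / 4) := by
      have : (r⁻¹ • (f - h)) z = r⁻¹ * ((f - h) z) := rfl
      rw [this] at hz2
      have := (mul_lt_mul_iff_right₀ hr_pos).mpr hz2
      rw [mul_comm r, ← mul_assoc, mul_inv_cancel₀ (ne_of_gt hr_pos),
        one_mul] at this
      linarith [this]
    have hfh : (f - h) z > r - η / 2 := by nlinarith
    have hfz1 : f z ≤ 1 := by
      have := f.le_opNorm z
      rw [hf, one_mul] at this
      have h1 : f z ≤ ‖f z‖ := le_abs_self _
      nlinarith
    have hnhz : -h z > 1 - α + β - 3.5 * η := by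
      have h4 : (f - h) z = f z - h z := rfl
      nlinarith
    have hhx2 : h x ≥ 1 - η := by
      have hy3 : h y ≥ -1 := by
        have := h.le_opNorm y
        rw [hh1, one_mul] at this
        have h1 : -h y ≤ ‖h y‖ := neg_le_abs _
        nlinarith
      linarith [hhxy]
    have hfinal : h x - h z ≤ ‖x - z‖ := by
      have h1 : h (x - z) ≤ ‖h (x - z)‖ := le_abs_self _
      have h2 : ‖h (x - z)‖ ≤ ‖h‖ * ‖x - z‖ := h.le_opNorm _
      rw [hh1, one_mul, map_sub] at *
      linarith
    nlinarith
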